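/- arXiv:2507.02482 — 2 statements merged into one kernel-verified Lean document; each statement's English description precedes it below -/
import Mathlib

section
/- Let m ≥ 1 and c ≥ 0, let R : ℝ → (real m×m matrices) be continuous, and let U : ℝ → (real m×m matrices) be differentiable with U'(t) + U(t)² + R(t) = 0 for all t ≥ 0, such that for every t ≥ 0 the matrix U(t) is positive semidefinite and c·I − U(t) is positive semidefinite. Then liminf_{t→∞} (1/t)∫₀ᵗ tr(R(s)) ds ≤ 0. -/
open MeasureTheory intervalIntegral Filter

lemma psd_trace_nonneg {m : ℕ} {A : Matrix (Fin m) (Fin m) ℝ} (hA : A.PosSemidef) :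
    0 ≤ A.trace := by
  refine Finset.sum_nonneg fun i _ => ?_
  have := hA.2 (Finsupp.single i 1)
  simpa [dotProduct, Matrix.mulVec, Pi.single_apply] using this

/-- For a bounded Riccati solution `0 ≤ U(t) ≤ c • I` of `U' + U² + R = 0`, the lower
asymptotic average of `tr R` is nonpositive. -/
theorem liminf_avg_trace_R_nonpos (m : ℕ) (hm : 1 ≤ m) (c : ℝ) (hc : 0 ≤ c)
    (R U U' : ℝ → Matrix (Fin m) (Fin m) ℝ)
    (hR : Continuous R)
    (hU : ∀ t, ∀ i j, HasDerivAt (fun τ => U τ i j) (U' t i j) t)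
    (hric : ∀ t, 0 ≤ t → U' t + U t * U t + R t = 0)
    (hpsd : ∀ t, 0 ≤ t → (U t).PosSemidef)
    (hle : ∀ t, 0 ≤ t → (c • (1 : Matrix (Fin m) (Fin m) ℝ) - U t).PosSemidef) :
    liminf (fun t : ℝ => (1 / t) * ∫ s in (0:ℝ)..t, (R s).trace) atTop ≤ 0 := by
  have hUc : ∀ i j, Continuous fun t => U t i j := fun i j =>
    continuous_iff_continuousAt.mpr fun t => (hU t i j).continuousAt
  have hUcm : Continuous U := continuous_pi fun i => continuous_pi fun j => hUc i j
  have hsq : Continuous fun s => (U s * U s).trace :=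
    (hUcm.matrix_mul hUcm).matrix_trace
  have hf' : ∀ t, HasDerivAt (fun τ => (U τ).trace) ((U' t).trace) t := by
    intro t
    simp only [Matrix.trace, Matrix.diag]
    exact HasDerivAt.fun_sum fun i _ => hU t i i
  -- trace of U² is nonneg for t ≥ 0
  have hsqnn : ∀ s : ℝ, 0 ≤ s → 0 ≤ (U s * U s).trace := by
    intro s hs
    have h1 : (U s * U s).PosSemidef := by
      have := Matrix.posSemidef_conjTranspose_mul_self (U s)
      rwa [(hpsd s hs).1] at this
    exact psd_trace_nonneg h1
  -- key integral bound
  have key : ∀ t : ℝ, 0 ≤ t → (∫ s in (0:ℝ)..t, (R s).trace) ≤ (U 0).trace := by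
    intro t ht
    set g : ℝ → ℝ := fun s => (U s * U s).trace + (R s).trace with hg
    have hgc : Continuous g := hsq.add (hR.matrix_trace)
    have heq : Set.EqOn (fun s => (U' s).trace) (fun s => -g s) (Set.uIcc 0 t) := by
      intro s hs
      rw [Set.uIcc_of_le ht] at hs
      have h0 := hric s hs.1
      have : U' s = -(U s * U s + R s) := by
        have h0' : U' s + (U s * U s + R s) = 0 := by rw [← add_assoc]; exact h0
        exact eq_neg_of_add_eq_zero_left h0'
      simp [g, this, Matrix.trace_add]
    have hint : IntervalIntegrable (fun s => (U' s).trace) volume 0 t := by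
      refine (ContinuousOn.intervalIntegrable ?_)
      exact (hgc.neg.continuousOn).congr heq
    have hftc : (∫ s in (0:ℝ)..t, (U' s).trace) = (U t).trace - (U 0).trace :=
      intervalIntegral.integral_eq_sub_of_hasDerivAt (fun s _ => hf' s) hint
    have hcongr : (∫ s in (0:ℝ)..t, (U' s).trace) = ∫ s in (0:ℝ)..t, -g s :=
      intervalIntegral.integral_congr heq
    have hgint : IntervalIntegrable g volume 0 t := hgc.intervalIntegrable _ _
    have hsplit : (∫ s in (0:ℝ)..t, -g s)
        = -((∫ s in (0:ℝ)..t, (U s * U s).trace) + ∫ s in (0:ℝ)..t, (R s).trace) := by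
      rw [intervalIntegral.integral_neg]
      congr 1
      exact intervalIntegral.integral_add (hsq.intervalIntegrable _ _)
        ((hR.matrix_trace).intervalIntegrable _ _)
    have hRint : (∫ s in (0:ℝ)..t, (R s).trace)
        = (U 0).trace - (U t).trace - ∫ s in (0:ℝ)..t, (U s * U s).trace := by
      have := hftc.symm.trans hcongr
      rw [hsplit] at this
      linarith
    have h1 : 0 ≤ (U t).trace := psd_trace_nonneg (hpsd t ht)
    have h2 : 0 ≤ ∫ s in (0:ℝ)..t, (U s * U s).trace :=
      intervalIntegral.integral_nonneg ht fun s hs => hsqnn s hs.1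
    linarith [hRint]
  -- now conclude
  have hev : ∀ᶠ t : ℝ in atTop,
      (1 / t) * (∫ s in (0:ℝ)..t, (R s).trace) ≤ (U 0).trace / t := by
    filter_upwards [eventually_ge_atTop (1 : ℝ)] with t ht
    have ht0 : (0:ℝ) < t := lt_of_lt_of_le one_pos ht
    rw [one_div, div_eq_inv_mul]
    exact mul_le_mul_of_nonneg_left (key t ht0.le) (inv_nonneg.mpr ht0.le)
  have htend : Tendsto (fun t : ℝ => (U 0).trace / t) atTop (nhds 0) :=
    tendsto_const_nhds.div_atTop tendsto_id
  rw [liminf_eq]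
  apply Real.sSup_le _ le_rfl
  rintro x hx
  have hx' : ∀ᶠ t : ℝ in atTop, x ≤ (U 0).trace / t := by
    filter_upwards [hx, hev] with t h1 h2 using h1.trans h2
  exact ge_of_tendsto htend hx'
end

section
/- Let m ≥ 1 and c ≥ 0, let R : ℝ → (real m×m matrices) be continuous, and let U : ℝ → (real m×m matrices) be differentiable with U'(t) + U(t)² + R(t) = 0 for all t ≥ 0, such that for every t ≥ 0 the matrix U(t) is positive semidefinite and c·I − U(t) is positive semidefinite. If lim_{t→∞} (1/t)∫₀ᵗ tr(U(s)) ds = 0, then lim_{t→∞} (1/t)∫₀ᵗ tr(U(s)²) ds = 0 and lim_{t→∞} (1/t)∫₀ᵗ tr(R(s)) ds = 0. -/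
open MeasureTheory intervalIntegral Filter Matrix

lemma psd_trace_nonneg' {n : ℕ} {M : Matrix (Fin n) (Fin n) ℝ} (hM : M.PosSemidef) :
    0 ≤ M.trace := by
  rw [Matrix.trace]
  apply Finset.sum_nonneg
  intro i _
  have h := hM.dotProduct_mulVec_nonneg (Pi.single i 1)
  simpa [dotProduct, Matrix.mulVec, Pi.single_apply, Finset.sum_ite_eq,
    Matrix.diag] using h

open scoped MatrixOrder in
lemma trace_mul_psd_nonneg' {n : ℕ} {A B : Matrix (Fin n) (Fin n) ℝ}
    (hA : A.PosSemidef) (hB : B.PosSemidef) : 0 ≤ (A * B).trace := by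
  obtain ⟨C, hC⟩ := CStarAlgebra.nonneg_iff_eq_star_mul_self.mp hB.nonneg
  rw [star_eq_conjTranspose] at hC
  subst hC
  have h : (C * A * Cᴴ).PosSemidef := hA.mul_mul_conjTranspose_same C
  have he : (A * (Cᴴ * C)).trace = (C * A * Cᴴ).trace := by
    rw [← mul_assoc, Matrix.trace_mul_comm, ← mul_assoc]
  rw [he]
  exact psd_trace_nonneg' h

/-- Zero-exponent rigidity (analytic core of Lemma 3.5): for a bounded Riccati solution
`0 ≤ U(t) ≤ c • I` of `U' + U² + R = 0`, if the asymptotic average of `tr U` vanishes, then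
so do the asymptotic averages of `tr (U²)` and of `tr R`. -/
theorem avg_trace_sq_and_R_tendsto_zero (m : ℕ) (hm : 1 ≤ m) (c : ℝ) (hc : 0 ≤ c)
    (R U U' : ℝ → Matrix (Fin m) (Fin m) ℝ)
    (hR : Continuous R)
    (hU : ∀ t, ∀ i j, HasDerivAt (fun τ => U τ i j) (U' t i j) t)
    (hric : ∀ t, 0 ≤ t → U' t + U t * U t + R t = 0)
    (hpsd : ∀ t, 0 ≤ t → (U t).PosSemidef)
    (hle : ∀ t, 0 ≤ t → (c • (1 : Matrix (Fin m) (Fin m) ℝ) - U t).PosSemidef)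
    (hzero : Tendsto (fun t : ℝ => (1 / t) * ∫ s in (0:ℝ)..t, (U s).trace) atTop (nhds 0)) :
    Tendsto (fun t : ℝ => (1 / t) * ∫ s in (0:ℝ)..t, (U s * U s).trace) atTop (nhds 0) ∧
    Tendsto (fun t : ℝ => (1 / t) * ∫ s in (0:ℝ)..t, (R s).trace) atTop (nhds 0) := by
  have hUc : Continuous U := continuous_matrix fun i j =>
    continuous_iff_continuousAt.mpr fun t => (hU t i j).continuousAt
  have hfc : Continuous fun t => (U t).trace := hUc.matrix_trace
  have hqc : Continuous fun t => (U t * U t).trace := (hUc.matrix_mul hUc).matrix_trace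
  have hrc : Continuous fun t => (R t).trace := hR.matrix_trace
  have hIntf : ∀ t : ℝ, IntervalIntegrable (fun s => (U s).trace) volume 0 t :=
    fun t => hfc.intervalIntegrable 0 t
  have hIntq : ∀ t : ℝ, IntervalIntegrable (fun s => (U s * U s).trace) volume 0 t :=
    fun t => hqc.intervalIntegrable 0 t
  have hIntr : ∀ t : ℝ, IntervalIntegrable (fun s => (R s).trace) volume 0 t :=
    fun t => hrc.intervalIntegrable 0 t
  -- pointwise bounds
  have hq0 : ∀ s : ℝ, 0 ≤ s → 0 ≤ (U s * U s).trace := fun s hs =>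
    trace_mul_psd_nonneg' (hpsd s hs) (hpsd s hs)
  have hqle : ∀ s : ℝ, 0 ≤ s → (U s * U s).trace ≤ c * (U s).trace := by
    intro s hs
    have h := trace_mul_psd_nonneg' (hpsd s hs) (hle s hs)
    have he : (U s * (c • (1 : Matrix (Fin m) (Fin m) ℝ) - U s)).trace
        = c * (U s).trace - (U s * U s).trace := by
      rw [Matrix.mul_sub, Matrix.mul_smul, Matrix.mul_one, Matrix.trace_sub, Matrix.trace_smul,
        smul_eq_mul]
    rw [he] at h
    linarith
  have hfb : ∀ s : ℝ, 0 ≤ s → (U s).trace ≤ c * m := by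
    intro s hs
    have h := psd_trace_nonneg' (hle s hs)
    rw [Matrix.trace_sub, Matrix.trace_smul, Matrix.trace_one, smul_eq_mul] at h
    simpa using sub_nonneg.mp h
  -- first limit
  have h1 : Tendsto (fun t : ℝ => (1 / t) * ∫ s in (0:ℝ)..t, (U s * U s).trace)
      atTop (nhds 0) := by
    have hg : Tendsto (fun t : ℝ => c * ((1 / t) * ∫ s in (0:ℝ)..t, (U s).trace))
        atTop (nhds 0) := by
      simpa using hzero.const_mul c
    apply squeeze_zero' ?_ ?_ hg
    · filter_upwards [eventually_ge_atTop (0:ℝ)] with t ht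
      exact mul_nonneg (by positivity)
        (intervalIntegral.integral_nonneg ht fun s hs => hq0 s hs.1)
    · filter_upwards [eventually_ge_atTop (0:ℝ)] with t ht
      have hmono : (∫ s in (0:ℝ)..t, (U s * U s).trace)
          ≤ ∫ s in (0:ℝ)..t, c * (U s).trace :=
        intervalIntegral.integral_mono_on ht (hIntq t) ((hIntf t).const_mul c)
          fun s hs => hqle s hs.1
      have hcm : (∫ s in (0:ℝ)..t, c * (U s).trace) = c * ∫ s in (0:ℝ)..t, (U s).trace :=
        intervalIntegral.integral_const_mul c _
      calc (1 / t) * ∫ s in (0:ℝ)..t, (U s * U s).trace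
          ≤ (1 / t) * ∫ s in (0:ℝ)..t, c * (U s).trace :=
            mul_le_mul_of_nonneg_left hmono (by positivity)
        _ = c * ((1 / t) * ∫ s in (0:ℝ)..t, (U s).trace) := by rw [hcm]; ring
  -- derivative of the trace
  have hFd : ∀ t : ℝ, HasDerivAt (fun τ => (U τ).trace) ((U' t).trace) t := by
    intro t
    have h : HasDerivAt (fun τ => ∑ i, U τ i i) (∑ i, U' t i i) t :=
      HasDerivAt.fun_sum fun i _ => hU t i i
    simpa [Matrix.trace, Matrix.diag] using h
  -- key integral identity
  have key : ∀ t : ℝ, 0 ≤ t → (∫ s in (0:ℝ)..t, (R s).trace)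
      = (U 0).trace - (U t).trace - ∫ s in (0:ℝ)..t, (U s * U s).trace := by
    intro t ht
    have huIcc : Set.uIcc (0:ℝ) t = Set.Icc 0 t := Set.uIcc_of_le ht
    have heq : Set.EqOn (fun s => (U' s).trace)
        (fun s => -((U s * U s).trace + (R s).trace)) (Set.uIcc (0:ℝ) t) := by
      intro s hs
      rw [huIcc] at hs
      have h := congrArg Matrix.trace (hric s hs.1)
      simp only [Matrix.trace_add, Matrix.trace_zero] at h
      simp only
      linarith
    have hInt : IntervalIntegrable (fun s => (U' s).trace) volume 0 t :=
      (((hqc.add hrc).neg.continuousOn).congr heq).intervalIntegrable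
    have hFTC := intervalIntegral.integral_eq_sub_of_hasDerivAt
      (fun s _ => hFd s) hInt
    have hcongr : (∫ s in (0:ℝ)..t, (U' s).trace)
        = ∫ s in (0:ℝ)..t, -((U s * U s).trace + (R s).trace) :=
      intervalIntegral.integral_congr heq
    rw [hcongr, intervalIntegral.integral_neg,
      intervalIntegral.integral_add (hIntq t) (hIntr t)] at hFTC
    linarith [hFTC]
  -- boundary term tends to zero
  have hbdd : Tendsto (fun t : ℝ => (1 / t) * ((U 0).trace - (U t).trace)) atTop (nhds 0) := by
    have hB : Tendsto (fun t : ℝ => (|(U 0).trace| + c * m) * (1 / t)) atTop (nhds 0) := by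
      have := tendsto_inv_atTop_zero.const_mul (|(U 0).trace| + c * m)
      simpa [one_div] using this
    apply squeeze_zero_norm' ?_ hB
    filter_upwards [eventually_ge_atTop (0:ℝ)] with t ht
    have h1' : 0 ≤ (U t).trace := psd_trace_nonneg' (hpsd t ht)
    have h2' : (U t).trace ≤ c * m := hfb t ht
    have h3 := le_abs_self ((U 0).trace)
    have h4 := neg_abs_le ((U 0).trace)
    have habs : |(U 0).trace - (U t).trace| ≤ |(U 0).trace| + c * m := by
      rcases abs_cases ((U 0).trace - (U t).trace) with ⟨he, _⟩ | ⟨he, _⟩ <;> linarith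
    calc ‖(1 / t) * ((U 0).trace - (U t).trace)‖
        = (1 / t) * |(U 0).trace - (U t).trace| := by
          rw [Real.norm_eq_abs, abs_mul, abs_of_nonneg (by positivity : (0:ℝ) ≤ 1 / t)]
      _ ≤ (1 / t) * (|(U 0).trace| + c * m) :=
          mul_le_mul_of_nonneg_left habs (by positivity)
      _ = (|(U 0).trace| + c * m) * (1 / t) := by ring
  -- second limit
  have h2 : Tendsto (fun t : ℝ => (1 / t) * ∫ s in (0:ℝ)..t, (R s).trace) atTop (nhds 0) := by
    have hsum : Tendsto (fun t : ℝ => (1 / t) * ((U 0).trace - (U t).trace)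
        - (1 / t) * ∫ s in (0:ℝ)..t, (U s * U s).trace) atTop (nhds 0) := by
      simpa using hbdd.sub h1
    apply Tendsto.congr' ?_ hsum
    filter_upwards [eventually_ge_atTop (0:ℝ)] with t ht
    rw [key t ht]; ring
  exact ⟨h1, h2⟩
end
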